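/- For fixed δ ∈ (0,1) and μ > 0, the function δ(ε, μ) = Φ(−ε/μ + μ/2) − e^ε Φ(−ε/μ − μ/2) is strictly decreasing in ε; consequently the ε solving δ(ε, μ) = δ (when it exists) is uniquely determined by μ. -/

import Mathlib

open ProbabilityTheory MeasureTheory

/-- Standard normal CDF `Φ`. -/
noncomputable def stdGaussCDF (x : ℝ) : ℝ := (gaussianReal 0 1 (Set.Iic x)).toReal

/-- GDP curve `δ(ε, μ) = Φ(−ε/μ + μ/2) − e^ε Φ(−ε/μ − μ/2)`. -/
noncomputable def gdpDelta (ε μ : ℝ) : ℝ :=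
  stdGaussCDF (-ε / μ + μ / 2) - Real.exp ε * stdGaussCDF (-ε / μ - μ / 2)

lemma continuous_stdGaussPDF : Continuous (gaussianPDFReal 0 1) := by
  unfold gaussianPDFReal
  fun_prop

lemma stdGaussCDF_eq (x : ℝ) :
    stdGaussCDF x = ∫ t in Set.Iic x, gaussianPDFReal 0 1 t := by
  rw [stdGaussCDF, gaussianReal_apply_eq_integral 0 one_ne_zero,
    ENNReal.toReal_ofReal (integral_nonneg fun t => gaussianPDFReal_nonneg 0 1 t)]

lemma stdGaussCDF_pos (x : ℝ) : 0 < stdGaussCDF x := by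
  rw [stdGaussCDF]
  refine ENNReal.toReal_pos (fun h => ?_) (measure_ne_top _ _)
  have := gaussianReal_absolutelyContinuous' 0 one_ne_zero h
  simp [Real.volume_Iic] at this

lemma hasDerivAt_stdGaussCDF (x : ℝ) :
    HasDerivAt stdGaussCDF (gaussianPDFReal 0 1 x) x := by
  have hint : Integrable (gaussianPDFReal 0 1) := integrable_gaussianPDFReal 0 1
  have key : ∀ y : ℝ, stdGaussCDF y
      = stdGaussCDF 0 + ∫ t in (0:ℝ)..y, gaussianPDFReal 0 1 t := by
    intro y
    have := intervalIntegral.integral_Iic_sub_Iic (μ := volume) (a := (0:ℝ)) (b := y)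
      hint.integrableOn hint.integrableOn
    rw [stdGaussCDF_eq, stdGaussCDF_eq]
    linarith
  have hd : HasDerivAt (fun y : ℝ => stdGaussCDF 0 + ∫ t in (0:ℝ)..y, gaussianPDFReal 0 1 t)
      (gaussianPDFReal 0 1 x) x := by
    refine HasDerivAt.const_add _ ?_
    exact intervalIntegral.integral_hasDerivAt_right hint.intervalIntegrable
      continuous_stdGaussPDF.stronglyMeasurable.stronglyMeasurableAtFilter
      continuous_stdGaussPDF.continuousAt
  exact hd.congr_of_eventuallyEq (Filter.Eventually.of_forall key)

lemma stdGaussPDF_identity {μ : ℝ} (hμ : 0 < μ) (ε : ℝ) :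
    Real.exp ε * gaussianPDFReal 0 1 (-ε / μ - μ / 2)
      = gaussianPDFReal 0 1 (-ε / μ + μ / 2) := by
  simp only [gaussianPDFReal, sub_zero]
  rw [mul_comm (Real.exp ε), mul_assoc, ← Real.exp_add]
  congr 2
  field_simp
  push_cast
  ring

lemma hasDerivAt_gdpDelta {μ : ℝ} (hμ : 0 < μ) (ε : ℝ) :
    HasDerivAt (fun ε => gdpDelta ε μ)
      (-(Real.exp ε * stdGaussCDF (-ε / μ - μ / 2))) ε := by
  have hμ' : μ ≠ 0 := hμ.ne'
  have hlin1 : HasDerivAt (fun ε : ℝ => -ε / μ + μ / 2) (-(1/μ)) ε := by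
    simpa [neg_div] using (((hasDerivAt_id ε).neg).div_const μ).add_const (μ / 2)
  have hlin2 : HasDerivAt (fun ε : ℝ => -ε / μ - μ / 2) (-(1/μ)) ε := by
    simpa [neg_div] using (((hasDerivAt_id ε).neg).div_const μ).sub_const (μ / 2)
  have h1 : HasDerivAt (fun ε : ℝ => stdGaussCDF (-ε / μ + μ / 2))
      (gaussianPDFReal 0 1 (-ε / μ + μ / 2) * (-(1/μ))) ε :=
    (hasDerivAt_stdGaussCDF _).comp ε hlin1
  have h2 : HasDerivAt (fun ε : ℝ => stdGaussCDF (-ε / μ - μ / 2))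
      (gaussianPDFReal 0 1 (-ε / μ - μ / 2) * (-(1/μ))) ε :=
    (hasDerivAt_stdGaussCDF _).comp ε hlin2
  have h3 : HasDerivAt (fun ε : ℝ => Real.exp ε * stdGaussCDF (-ε / μ - μ / 2))
      (Real.exp ε * stdGaussCDF (-ε / μ - μ / 2)
        + Real.exp ε * (gaussianPDFReal 0 1 (-ε / μ - μ / 2) * (-(1/μ)))) ε := by
    exact (Real.hasDerivAt_exp ε).mul h2
  have h := h1.sub h3
  have hkey := stdGaussPDF_identity hμ ε
  unfold gdpDelta
  refine h.congr_deriv ?_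
  linear_combination (1/μ) * hkey

/-- For fixed `μ > 0`, `ε ↦ δ(ε, μ)` is strictly decreasing on `ε ≥ 0`; consequently
for fixed `δ ∈ (0,1)` the `ε ≥ 0` solving `δ(ε, μ) = δ` (when it exists) is unique. -/
theorem gdpDelta_strictAnti (μ : ℝ) (hμ : 0 < μ) :
    StrictAntiOn (fun ε => gdpDelta ε μ) (Set.Ici 0)
    ∧ ∀ δ ∈ Set.Ioo (0 : ℝ) 1, ∀ ε₁ ∈ Set.Ici (0 : ℝ), ∀ ε₂ ∈ Set.Ici (0 : ℝ),
        gdpDelta ε₁ μ = δ → gdpDelta ε₂ μ = δ → ε₁ = ε₂ := by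
  have hanti : StrictAntiOn (fun ε => gdpDelta ε μ) (Set.Ici 0) := by
    refine strictAntiOn_of_deriv_neg (convex_Ici 0)
      (fun x _ => (hasDerivAt_gdpDelta hμ x).continuousAt.continuousWithinAt)
      (fun x _ => ?_)
    rw [(hasDerivAt_gdpDelta hμ x).deriv]
    have := stdGaussCDF_pos (-x / μ - μ / 2)
    nlinarith [Real.exp_pos x]
  refine ⟨hanti, fun δ _ ε₁ h₁ ε₂ h₂ he₁ he₂ => hanti.injOn h₁ h₂ (he₁.trans he₂.symm)⟩
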